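/- Let λ be a Perron number of degree l over ℚ. Then for every positive integer k, the number λᵏ also has degree l over ℚ, and the map μ ↦ μᵏ is a bijection from the set of Galois conjugates of λ onto the set of Galois conjugates of λᵏ. -/

import Mathlib

open Polynomial

/-- The Galois conjugates of a real algebraic number: the complex roots of its
minimal polynomial over `ℚ`. -/
def galoisConjugates (x : ℝ) : Set ℂ :=
  {z : ℂ | Polynomial.aeval z (minpoly ℚ x) = 0}

/-- A Perron number: a real algebraic integer `l > 1` all of whose Galois conjugates
other than `l` itself have modulus strictly less than `l`. -/
def IsPerron (l : ℝ) : Prop :=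
  1 < l ∧ IsIntegral ℤ l ∧
    ∀ z : ℂ, z ∈ galoisConjugates l → z ≠ (l : ℂ) → ‖z‖ < l

set_option maxHeartbeats 1000000 in
set_option synthInstance.maxHeartbeats 400000 in
open IntermediateField in
theorem perron_powers (l : ℝ) (hl : IsPerron l) (d : ℕ)
    (hd : (minpoly ℚ l).natDegree = d) :
    ∀ k : ℕ, 0 < k →
      (minpoly ℚ (l ^ k)).natDegree = d ∧
      Set.BijOn (fun z : ℂ => z ^ k) (galoisConjugates l) (galoisConjugates (l ^ k)) := by
  obtain ⟨hl1, hlint, hconj⟩ := hl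
  intro k hk
  have hk0 : k ≠ 0 := hk.ne'
  have hl0 : (0:ℝ) < l := lt_trans one_pos hl1
  have hlQ : IsIntegral ℚ l := hlint.tower_top
  set lc : ℂ := (l : ℂ) with hlc
  have hlcQ : IsIntegral ℚ lc := hlQ.map (IsScalarTower.toAlgHom ℚ ℝ ℂ)
  have hlckQ : IsIntegral ℚ (lc ^ k) := hlcQ.pow k
  have hinj : Function.Injective (algebraMap ℝ ℂ) := fun a b h => by
    simpa using congrArg Complex.re h
  have hp : minpoly ℚ lc = minpoly ℚ l := minpoly.algebraMap_eq (A := ℚ) hinj l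
  have hq : minpoly ℚ (lc ^ k) = minpoly ℚ (l ^ k) := by
    have := minpoly.algebraMap_eq (A := ℚ) hinj (l ^ k)
    rwa [map_pow] at this
  set p : ℚ[X] := minpoly ℚ lc with hpdef
  set q : ℚ[X] := minpoly ℚ (lc ^ k) with hqdef
  -- the key Perron step: lc ∈ ℚ⟮lc ^ k⟯
  set K : IntermediateField ℚ ℂ := ℚ⟮lc ^ k⟯ with hK
  have hgen : (IntermediateField.AdjoinSimple.gen ℚ (lc ^ k) : ℂ) = lc ^ k := rfl
  have hlcK : IsIntegral K lc := hlcQ.tower_top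
  have hlcmem : lc ∈ K := by
    by_contra hmem
    -- the minpoly of lc over K has degree ≥ 2
    set m : K[X] := minpoly K lc with hm
    have hm1 : m.natDegree ≠ 1 := by
      intro h1
      exact hmem (by
        obtain ⟨x, hx⟩ := (RingHom.mem_range).1 ((minpoly.natDegree_eq_one_iff).1 h1)
        have : (x : ℂ) = lc := hx
        exact this ▸ x.2)
    have hmpos : 0 < m.natDegree := minpoly.natDegree_pos hlcK
    have hm2 : 2 ≤ m.natDegree := by omega
    -- m divides X^k - C (gen)
    have hdvd1 : m ∣ (X ^ k - C (IntermediateField.AdjoinSimple.gen ℚ (lc ^ k))) := by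
      apply minpoly.dvd
      simp only [map_sub, map_pow, aeval_X, aeval_C]
      rw [show (algebraMap K ℂ) (IntermediateField.AdjoinSimple.gen ℚ (lc ^ k)) = lc ^ k from rfl]
      ring
    -- m divides p mapped to K
    have hdvd2 : m ∣ p.map (algebraMap ℚ K) := minpoly.dvd_map_of_isScalarTower ℚ K lc
    -- m has ≥ 2 distinct roots in ℂ
    haveI : CharZero K := charZero_of_injective_algebraMap (R := ℚ) (algebraMap ℚ K).injective
    have hmsep : m.Separable := (minpoly.irreducible hlcK).separable
    have hcard : Fintype.card (m.rootSet ℂ) = m.natDegree :=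
      card_rootSet_eq_natDegree hmsep (IsAlgClosed.splits _)
    have : ∃ μ ∈ m.rootSet ℂ, μ ≠ lc := by
      by_contra hcon
      push_neg at hcon
      have hsub : m.rootSet ℂ ⊆ {lc} := fun z hz => hcon z hz
      have hle : Fintype.card (m.rootSet ℂ) ≤ 1 := by
        have := Set.ncard_le_ncard hsub (Set.finite_singleton lc)
        rwa [Set.ncard_singleton, Set.ncard_eq_toFinset_card', Set.toFinset_card] at this
      omega
    obtain ⟨μ, hμroot, hμne⟩ := this
    have hμm : aeval μ m = 0 := (mem_rootSet.1 hμroot).2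
    -- μ^k = lc^k
    have hμk : μ ^ k = lc ^ k := by
      obtain ⟨c, hc⟩ := hdvd1
      have := congrArg (aeval μ) hc
      rw [map_mul, hμm, zero_mul, map_sub, map_pow, aeval_X, aeval_C] at this
      rw [show (algebraMap K ℂ) (IntermediateField.AdjoinSimple.gen ℚ (lc ^ k)) = lc ^ k from
        rfl] at this
      linear_combination this
    -- μ is a Galois conjugate of l
    have hμp : aeval μ p = 0 := by
      obtain ⟨c, hc⟩ := hdvd2
      have := congrArg (aeval μ) hc
      rw [map_mul, hμm, zero_mul, aeval_map_algebraMap] at this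
      exact this
    have hμconj : μ ∈ galoisConjugates l := by
      simpa [galoisConjugates, hp] using hμp
    have hlt : ‖μ‖ < l := hconj μ hμconj hμne
    have habs : ‖μ‖ = l := by
      have h1 : ‖μ‖ ^ k = l ^ k := by
        rw [← norm_pow, hμk, norm_pow, hlc, Complex.norm_real, Real.norm_eq_abs, abs_of_pos hl0]
      exact (pow_left_strictMonoOn₀ hk0).injOn
        (by exact norm_nonneg μ) (le_of_lt hl0) h1
    rw [habs] at hlt
    exact lt_irrefl _ hlt
  -- hence ℚ⟮lc⟯ = K and degrees match
  have hKeq : K = ℚ⟮lc⟯ := by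
    apply le_antisymm
    · rw [IntermediateField.adjoin_simple_le_iff]
      exact pow_mem (IntermediateField.mem_adjoin_simple_self ℚ lc) k
    · rw [IntermediateField.adjoin_simple_le_iff]
      exact hlcmem
  have hdeg : q.natDegree = p.natDegree := by
    rw [← IntermediateField.adjoin.finrank hlckQ, ← IntermediateField.adjoin.finrank hlcQ, ← hK,
      hKeq]
  -- describe the two conjugate sets as root sets
  have hp0 : p ≠ 0 := minpoly.ne_zero hlcQ
  have hq0 : q ≠ 0 := minpoly.ne_zero hlckQ
  have hsetp : galoisConjugates l = p.rootSet ℂ := by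
    ext z
    simp only [galoisConjugates, Set.mem_setOf_eq, mem_rootSet, ← hp]
    exact ⟨fun h => ⟨hp0, h⟩, fun h => h.2⟩
  have hsetq : galoisConjugates (l ^ k) = q.rootSet ℂ := by
    ext z
    simp only [galoisConjugates, Set.mem_setOf_eq, mem_rootSet, ← hq]
    exact ⟨fun h => ⟨hq0, h⟩, fun h => h.2⟩
  -- maps to
  have hdvd : p ∣ q.comp (X ^ k) := by
    apply minpoly.dvd
    rw [aeval_comp, map_pow, aeval_X]
    exact minpoly.aeval ℚ (lc ^ k)
  have hmaps : Set.MapsTo (fun z : ℂ => z ^ k) (galoisConjugates l) (galoisConjugates (l ^ k)) := by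
    intro z hz
    rw [hsetp, mem_rootSet] at hz
    rw [hsetq, mem_rootSet]
    refine ⟨hq0, ?_⟩
    obtain ⟨c, hc⟩ := hdvd
    have := congrArg (aeval z) hc
    rw [map_mul, hz.2, zero_mul, aeval_comp, map_pow, aeval_X] at this
    exact this
  -- surjectivity
  have hsurj : Set.SurjOn (fun z : ℂ => z ^ k) (galoisConjugates l) (galoisConjugates (l ^ k)) := by
    intro ν hν
    rw [hsetq, mem_rootSet] at hν
    have hνgen : aeval ν (minpoly ℚ (IntermediateField.adjoin.powerBasis hlckQ).gen) = 0 := by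
      rw [show (IntermediateField.adjoin.powerBasis hlckQ).gen =
        IntermediateField.AdjoinSimple.gen ℚ (lc ^ k) from rfl]
      erw [IntermediateField.minpoly_gen]
      exact hν.2
    obtain ⟨φ, hφgen⟩ : ∃ φ : K →ₐ[ℚ] ℂ,
        φ (IntermediateField.AdjoinSimple.gen ℚ (lc ^ k)) = ν :=
      ⟨(IntermediateField.adjoin.powerBasis hlckQ).lift ν hνgen,
        (IntermediateField.adjoin.powerBasis hlckQ).lift_gen ν hνgen⟩
    have hxp : aeval (⟨lc, hlcmem⟩ : K) p = 0 := by
      have h1 : (algebraMap K ℂ) (aeval (⟨lc, hlcmem⟩ : K) p) = aeval lc p := by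
        rw [← aeval_algebraMap_apply]
        rfl
      rw [minpoly.aeval] at h1
      exact (algebraMap K ℂ).injective (by rw [h1, map_zero])
    refine ⟨φ ⟨lc, hlcmem⟩, ?_, ?_⟩
    · rw [hsetp, mem_rootSet]
      exact ⟨hp0, by rw [aeval_algHom_apply, hxp, map_zero]⟩
    · show φ ⟨lc, hlcmem⟩ ^ k = ν
      have hxk : (⟨lc, hlcmem⟩ : K) ^ k = IntermediateField.AdjoinSimple.gen ℚ (lc ^ k) :=
        Subtype.ext rfl
      rw [← map_pow, hxk, hφgen]
  -- injectivity by counting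
  have hfinp : (galoisConjugates l).Finite := by
    rw [hsetp]; exact p.rootSet_finite ℂ
  have hfinq : (galoisConjugates (l ^ k)).Finite := by
    rw [hsetq]; exact q.rootSet_finite ℂ
  have hcardp : (galoisConjugates l).ncard = p.natDegree := by
    rw [hsetp, Set.ncard_eq_toFinset_card', Set.toFinset_card]
    exact card_rootSet_eq_natDegree ((minpoly.irreducible hlcQ).separable)
      (IsAlgClosed.splits _)
  have hcardq : (galoisConjugates (l ^ k)).ncard = q.natDegree := by
    rw [hsetq, Set.ncard_eq_toFinset_card', Set.toFinset_card]
    exact card_rootSet_eq_natDegree ((minpoly.irreducible hlckQ).separable)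
      (IsAlgClosed.splits _)
  have hinjOn : Set.InjOn (fun z : ℂ => z ^ k) (galoisConjugates l) := by
    intro a ha b hb hab
    exact Set.inj_on_of_surj_on_of_ncard_le (fun z _ => z ^ k) hmaps
      (fun ν hν => by obtain ⟨μ, hμ, hμν⟩ := hsurj hν; exact ⟨μ, hμ, hμν⟩)
      (by rw [hcardp, hcardq, hdeg]) ha hb hab hfinp
  refine ⟨?_, hmaps, hinjOn, hsurj⟩
  rw [← hq, hdeg, hp, hd]
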